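/- Fix a vertex $x \in \mathbb{Z}^2$ and let $(t_y)_{y \in \mathbb{Z}^2}$ be i.i.d. atomless random variables. Let $A_r$ be the event that there exists a self-avoiding path of length greater than $r$ starting at $x$ along which the values $t_y$ are strictly increasing. Then $P(A_r) \leq 4 \cdot 3^r / \lfloor r/2 \rfloor!$, and in particular $P(A_r) \to 0$ as $r \to \infty$. -/

import Mathlib

open MeasureTheory ProbabilityTheory Filter
open scoped ENNReal

namespace Stmt3Aux


/-- the four unit directions in `ℤ × ℤ` -/
def D : Finset (ℤ × ℤ) := {(1,0), (-1,0), (0,1), (0,-1)}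

lemma mem_D {a b : ℤ} (h : |a| + |b| = 1) : (a, b) ∈ D := by
  simp only [D, Finset.mem_insert, Finset.mem_singleton, Prod.mk.injEq]
  rcases abs_cases a with ⟨h1, _⟩ | ⟨h1, _⟩ <;> rcases abs_cases b with ⟨h2, _⟩ | ⟨h2, _⟩ <;> omega

lemma mem_D' {p : ℤ × ℤ} (h : |p.1| + |p.2| = 1) : p ∈ D := by
  obtain ⟨a, b⟩ := p; exact mem_D h

lemma neg_mem_D {d : ℤ × ℤ} (h : d ∈ D) : -d ∈ D := by
  fin_cases h <;> decide

/-- code of a direction -/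
def c : ℤ × ℤ → ℕ := fun p =>
  if p = (1,0) then 0 else if p = (-1,0) then 1 else if p = (0,1) then 2 else 3

lemma c_injOn {d d' : ℤ × ℤ} (hd : d ∈ D) (hd' : d' ∈ D) (h : c d = c d') : d = d' := by
  fin_cases hd <;> fin_cases hd' <;> simp_all [c]

lemma c_lt_four {d : ℤ × ℤ} (hd : d ∈ D) : c d < 4 := by
  fin_cases hd <;> decide

def enc (prev cur : ℤ × ℤ) : ℕ :=
  if c cur < c (-prev) then c cur else c cur - 1

lemma enc_lt_three {p cur : ℤ × ℤ} (hp : p ∈ D) (hc : cur ∈ D) (hne : cur ≠ -p) :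
    enc p cur < 3 := by
  have h1 := c_lt_four hc
  have h2 := c_lt_four (neg_mem_D hp)
  have h3 : c cur ≠ c (-p) := fun h => hne (c_injOn hc (neg_mem_D hp) h)
  unfold enc; split <;> omega

lemma enc_inj {p cur cur' : ℤ × ℤ} (hp : p ∈ D) (hc : cur ∈ D) (hc' : cur' ∈ D)
    (hne : cur ≠ -p) (hne' : cur' ≠ -p) (h : enc p cur = enc p cur') : cur = cur' := by
  apply c_injOn hc hc'
  have h1 := c_lt_four hc
  have h1' := c_lt_four hc'
  have h2 := c_lt_four (neg_mem_D hp)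
  have h3 : c cur ≠ c (-p) := fun h => hne (c_injOn hc (neg_mem_D hp) h)
  have h3' : c cur' ≠ c (-p) := fun h => hne' (c_injOn hc' (neg_mem_D hp) h)
  unfold enc at h; split_ifs at h <;> omega

/-- admissible (non-backtracking) step sequences -/
def S (r : ℕ) : Finset (Fin (r+1) → ℤ × ℤ) :=
  (Fintype.piFinset fun _ => D).filter
    (fun s => ∀ i : Fin r, s i.succ ≠ -(s i.castSucc))

lemma card_S_le (r : ℕ) : (S r).card ≤ 4 * 3 ^ r := by
  have h : (S r).card ≤
      ((Finset.range 4) ×ˢ (Fintype.piFinset fun _ : Fin r => Finset.range 3)).card := by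
    apply Finset.card_le_card_of_injOn
      (fun s => (c (s 0), fun i : Fin r => enc (s i.castSucc) (s i.succ)))
    · intro s hs
      simp only [Finset.mem_coe, S, Finset.mem_filter, Fintype.mem_piFinset] at hs
      obtain ⟨hmem, hnb⟩ := hs
      simp only [Finset.mem_coe, Finset.mem_product, Finset.mem_range, Fintype.mem_piFinset]
      exact ⟨c_lt_four (hmem 0), fun i => enc_lt_three (hmem _) (hmem _) (hnb i)⟩
    · intro s hs s' hs' h
      simp only [Finset.coe_filter, S, Set.mem_setOf_eq, Finset.mem_filter,
        Fintype.mem_piFinset] at hs hs'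
      obtain ⟨hm, hnb⟩ := hs
      obtain ⟨hm', hnb'⟩ := hs'
      have h0 : c (s 0) = c (s' 0) := congrArg Prod.fst h
      have h1 : ∀ i : Fin r, enc (s i.castSucc) (s i.succ) = enc (s' i.castSucc) (s' i.succ) :=
        fun i => congrFun (congrArg Prod.snd h) i
      funext i
      induction i using Fin.induction with
      | zero => exact c_injOn (hm 0) (hm' 0) h0
      | succ i ih =>
          have h2 := h1 i
          rw [ih] at h2
          have hnbi : s i.succ ≠ -(s' i.castSucc) := ih ▸ hnb i
          exact enc_inj (hm' i.castSucc) (hm i.succ) (hm' i.succ) hnbi (hnb' i) h2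
  calc (S r).card ≤ _ := h
    _ = 4 * 3 ^ r := by
        simp [Finset.card_product, Fintype.card_piFinset]



def step (r : ℕ) (s : Fin (r+1) → ℤ × ℤ) : ℕ → ℤ × ℤ :=
  fun k => if h : k < r+1 then s ⟨k, h⟩ else 0

def pathOf (r : ℕ) (x : ℤ × ℤ) (s : Fin (r+1) → ℤ × ℤ) : Fin (r+2) → ℤ × ℤ :=
  fun j => x + ∑ k ∈ Finset.range j.val, step r s k

lemma pathOf_eq {r : ℕ} {x : ℤ × ℤ} (X : Fin (r+2) → ℤ × ℤ) (hX0 : X 0 = x) :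
    pathOf r x (fun i => X i.succ - X i.castSucc) = X := by
  set s : Fin (r+1) → ℤ × ℤ := fun i => X i.succ - X i.castSucc with hs
  set Y : ℕ → ℤ × ℤ := fun k => X ⟨min k (r+1), by omega⟩ with hY
  funext j
  have hj : j.val ≤ r + 1 := by omega
  have hsum : ∑ k ∈ Finset.range j.val, step r s k = Y j.val - Y 0 := by
    rw [← Finset.sum_range_sub (f := Y)]
    apply Finset.sum_congr rfl
    intro k hk
    have hk' : k < r + 1 := by
      have := Finset.mem_range.1 hk; omega
    simp only [step, dif_pos hk', hs, hY]
    congr 1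
    · exact congrArg X (Fin.ext (by simp [Fin.val_succ]; omega))
    · exact congrArg X (Fin.ext (by simp [Fin.coe_castSucc]; omega))
  show x + ∑ k ∈ Finset.range j.val, step r s k = X j
  rw [hsum]
  have h1 : Y j.val = X j := congrArg X (Fin.ext (by simp; omega))
  have h2 : Y 0 = X 0 := congrArg X (Fin.ext (by simp))
  rw [h1, h2, hX0]
  abel

lemma measurableSet_strictMono (m : ℕ) : MeasurableSet {v : Fin m → ℝ | StrictMono v} := by
  have h : {v : Fin m → ℝ | StrictMono v} =
      ⋂ (i : Fin m), ⋂ (j : Fin m), ⋂ (_ : i < j), {v : Fin m → ℝ | v i < v j} := by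
    ext v
    simp only [Set.mem_setOf_eq, Set.mem_iInter]
    exact ⟨fun h i j hij => h hij, fun h a b hab => h a b hab⟩
  rw [h]
  exact MeasurableSet.iInter fun i => MeasurableSet.iInter fun j => MeasurableSet.iInter fun _ =>
    measurableSet_lt (measurable_pi_apply i) (measurable_pi_apply j)

lemma pi_strictMono_le (μ : Measure ℝ) [IsProbabilityMeasure μ] (m : ℕ) :
    Measure.pi (fun _ : Fin m => μ) {v | StrictMono v} ≤ (m.factorial : ℝ≥0∞)⁻¹ := by
  set ν := Measure.pi (fun _ : Fin m => μ) with hν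
  haveI : IsProbabilityMeasure ν := by rw [hν]; infer_instance
  set M : Set (Fin m → ℝ) := {v | StrictMono v} with hM
  set C : Equiv.Perm (Fin m) → Set (Fin m → ℝ) := fun σ => {v | StrictMono (v ∘ σ)} with hC
  have hmeasC : ∀ σ, MeasurableSet (C σ) := by
    intro σ
    have h : C σ = (fun v : Fin m → ℝ => v ∘ σ) ⁻¹' M := rfl
    rw [h]
    exact (measurableSet_strictMono m).preimage
      (measurable_pi_lambda _ fun i => measurable_pi_apply _)
  have hdisj : Pairwise (Function.onFun Disjoint C) := by
    intro σ τ hne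
    refine Set.disjoint_left.2 fun v hσ hτ => hne ?_
    have hσ' : StrictMono (v ∘ σ) := hσ
    have hτ' : StrictMono (v ∘ τ) := hτ
    have hr : Set.range (v ∘ σ) = Set.range (v ∘ τ) := by
      rw [Set.range_comp, Set.range_comp, σ.range_eq_univ, τ.range_eq_univ]
    have heq : v ∘ σ = v ∘ τ := (hσ'.range_inj hτ').1 hr
    have hinj : Function.Injective v := by
      intro a b hab
      obtain ⟨a', rfl⟩ := σ.surjective a
      obtain ⟨b', rfl⟩ := σ.surjective b
      exact congrArg σ (hσ'.injective hab)
    exact Equiv.ext fun i => hinj (congrFun heq i)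
  have hνC : ∀ σ : Equiv.Perm (Fin m), ν (C σ) = ν M := by
    have key : ∀ σ : Equiv.Perm (Fin m), ν (C σ.symm) = ν M := by
      intro σ
      have hp := MeasureTheory.measurePreserving_piCongrLeft (fun _ : Fin m => μ) σ
      have hpre : (MeasurableEquiv.piCongrLeft (fun _ : Fin m => ℝ) σ) ⁻¹' M = C σ.symm := by
        ext v
        have he : (MeasurableEquiv.piCongrLeft (fun _ : Fin m => ℝ) σ) v = v ∘ σ.symm := by
          funext i
          have h1 := MeasurableEquiv.piCongrLeft_apply_apply σ (β := fun _ => ℝ) v (σ.symm i)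
          simpa using h1
        simp only [Set.mem_preimage, he, hC, hM, Set.mem_setOf_eq]
      have := hp.measure_preimage (measurableSet_strictMono m).nullMeasurableSet
      rwa [hpre] at this
    intro σ
    have := key σ.symm
    simpa using this
  have hsum : (m.factorial : ℝ≥0∞) * ν M ≤ 1 := by
    have h1 : ν (⋃ σ : Equiv.Perm (Fin m), C σ) = ∑' σ : Equiv.Perm (Fin m), ν (C σ) :=
      measure_iUnion hdisj hmeasC
    have h2 : ∑' σ : Equiv.Perm (Fin m), ν (C σ) = (m.factorial : ℝ≥0∞) * ν M := by
      rw [tsum_fintype]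
      rw [Finset.sum_congr rfl fun σ _ => hνC σ, Finset.sum_const, nsmul_eq_mul]
      congr 2
      simp [Fintype.card_perm]
    calc (m.factorial : ℝ≥0∞) * ν M = ν (⋃ σ, C σ) := by rw [h1, h2]
      _ ≤ 1 := prob_le_one
  rw [ENNReal.le_inv_iff_mul_le]
  rwa [mul_comm] at hsum



lemma map_eq_pi {Ω : Type*} [MeasurableSpace Ω] (P : Measure Ω) [IsProbabilityMeasure P]
    (t : ℤ × ℤ → Ω → ℝ) (hmeas : ∀ y, Measurable (t y))
    (hindep : iIndepFun t P)
    (μ : Measure ℝ) [IsProbabilityMeasure μ] (hid : ∀ y, Measure.map (t y) P = μ)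
    {m : ℕ} (y : Fin m → ℤ × ℤ) (hy : Function.Injective y) :
    Measure.map (fun ω i => t (y i) ω) P = Measure.pi (fun _ => μ) := by
  refine (Measure.pi_eq fun s hs => ?_).symm
  rw [Measure.map_apply (measurable_pi_lambda _ fun i => hmeas _) (MeasurableSet.univ_pi hs)]
  classical
  set ext : ℤ × ℤ → Set ℝ := Function.extend y s (fun _ => Set.univ) with hextdef
  have hext : ∀ i, ext (y i) = s i := fun i => hy.extend_apply _ _ _
  have hpre : (fun ω i => t (y i) ω) ⁻¹' Set.pi Set.univ s =
      ⋂ z ∈ Finset.univ.image y, t z ⁻¹' ext z := by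
    ext ω
    simp only [Set.mem_preimage, Set.mem_univ_pi, Set.mem_iInter, Finset.mem_image,
      Finset.mem_univ, true_and]
    constructor
    · rintro h z ⟨i, rfl⟩
      rw [hext]
      exact h i
    · intro h i
      have := h (y i) ⟨i, rfl⟩
      rwa [hext] at this
  have hmeasext : ∀ z ∈ Finset.univ.image y, MeasurableSet (ext z) := by
    intro z hz
    obtain ⟨i, -, rfl⟩ := Finset.mem_image.1 hz
    rw [hext]; exact hs i
  rw [hpre, hindep.measure_inter_preimage_eq_mul _ hmeasext,
    Finset.prod_image (fun a _ b _ h => hy h)]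
  refine Finset.prod_congr rfl fun i _ => ?_
  rw [hext i, ← hid (y i), Measure.map_apply (hmeas _) (hs i)]

lemma prob_strictMono_le {Ω : Type*} [MeasurableSpace Ω] (P : Measure Ω) [IsProbabilityMeasure P]
    (t : ℤ × ℤ → Ω → ℝ) (hmeas : ∀ y, Measurable (t y))
    (hindep : iIndepFun t P)
    (μ : Measure ℝ) [IsProbabilityMeasure μ] (hid : ∀ y, Measure.map (t y) P = μ)
    {m : ℕ} (y : Fin m → ℤ × ℤ) (hy : Function.Injective y) :
    P {ω | StrictMono fun i => t (y i) ω} ≤ (m.factorial : ℝ≥0∞)⁻¹ := by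
  have hmap := map_eq_pi P t hmeas hindep μ hid y hy
  have hT : Measurable (fun ω i => t (y i) ω) := measurable_pi_lambda _ fun i => hmeas _
  have heq : P {ω | StrictMono fun i => t (y i) ω} =
      Measure.pi (fun _ : Fin m => μ) {v | StrictMono v} := by
    rw [← hmap, Measure.map_apply hT (measurableSet_strictMono m)]
    rfl
  rw [heq]
  exact pi_strictMono_le μ m


end Stmt3Aux

open Stmt3Aux

/-- The probability that some self-avoiding path of length greater than `r` starting at
`x` has strictly increasing i.i.d. atomless arrival times along it is at most
`4 · 3^r / ⌊r/2⌋!`, and in particular tends to `0` as `r → ∞`. -/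
theorem stmt_3 {Ω : Type*} [MeasurableSpace Ω] (P : Measure Ω) [IsProbabilityMeasure P]
    (x : ℤ × ℤ)
    (t : ℤ × ℤ → Ω → ℝ) (hmeas : ∀ y, Measurable (t y))
    (hindep : iIndepFun t P)
    (μ : Measure ℝ) (hid : ∀ y, Measure.map (t y) P = μ)
    (hatomless : ∀ a : ℝ, μ {a} = 0)
    (A : ℕ → Set Ω)
    (hA : ∀ r, A r = {ω | ∃ n : ℕ, r < n ∧ ∃ X : Fin (n + 1) → ℤ × ℤ,
      X 0 = x ∧ Function.Injective X ∧
      (∀ i : Fin n, |(X i.succ).1 - (X i.castSucc).1| +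
        |(X i.succ).2 - (X i.castSucc).2| = 1) ∧
      StrictMono fun i : Fin (n + 1) => t (X i) ω}) :
    (∀ r : ℕ, P (A r) ≤ (4 * 3 ^ r : ℝ≥0∞) / (Nat.factorial (r / 2))) ∧
      Tendsto (fun r => P (A r)) atTop (nhds 0) := by
  haveI hμprob : IsProbabilityMeasure μ := by
    have h := Measure.isProbabilityMeasure_map (μ := P) (f := t (0,0)) (hmeas _).aemeasurable
    rwa [hid] at h
  have key : ∀ r : ℕ, P (A r) ≤ (4 * 3 ^ r : ℝ≥0∞) / (Nat.factorial (r / 2)) := by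
    intro r
    set E : (Fin (r+1) → ℤ × ℤ) → Set Ω :=
      fun s => {ω | StrictMono fun j : Fin (r+2) => t (pathOf r x s j) ω} with hE
    have hsub : A r ⊆ ⋃ s ∈ S r, E s := by
      rw [hA r]
      rintro ω ⟨n, hrn, X, hX0, hXinj, hXstep, hXmono⟩
      have hle : r + 2 ≤ n + 1 := by omega
      set X' : Fin (r+2) → ℤ × ℤ := fun j => X (Fin.castLE hle j) with hX'
      have hX'inj : Function.Injective X' := fun a b h => Fin.castLE_injective hle (hXinj h)
      set s : Fin (r+1) → ℤ × ℤ := fun i => X' i.succ - X' i.castSucc with hs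
      have hX'0 : X' 0 = x := by
        rw [← hX0]
        exact congrArg X (Fin.ext (by simp))
      have hpath : pathOf r x s = X' := pathOf_eq X' hX'0
      have hmemD : ∀ i : Fin (r+1), s i ∈ D := by
        intro i
        have hi : (i : ℕ) < n := by omega
        set j : Fin n := ⟨i, hi⟩ with hj
        have e1 : X' i.succ = X j.succ := congrArg X (Fin.ext (by simp [hj]))
        have e2 : X' i.castSucc = X j.castSucc := congrArg X (Fin.ext (by simp [hj]))
        apply mem_D'
        have h1 : (s i).1 = (X j.succ).1 - (X j.castSucc).1 := by
          simp only [hs, e1, e2, Prod.fst_sub]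
        have h2 : (s i).2 = (X j.succ).2 - (X j.castSucc).2 := by
          simp only [hs, e1, e2, Prod.snd_sub]
        rw [h1, h2]
        exact hXstep j
      have hnb : ∀ i : Fin r, s i.succ ≠ -(s i.castSucc) := by
        intro i hbad
        have e1 : s i.succ = X' ⟨i.val + 2, by omega⟩ - X' ⟨i.val + 1, by omega⟩ := by
          simp only [hs]
          congr 1 <;> exact congrArg X' (Fin.ext (by simp))
        have e2 : s i.castSucc = X' ⟨i.val + 1, by omega⟩ - X' ⟨i.val, by omega⟩ := by
          simp only [hs]
          congr 1 <;> exact congrArg X' (Fin.ext (by simp))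
        rw [e1, e2, neg_sub] at hbad
        have hkey : X' ⟨i.val + 2, by omega⟩ = X' ⟨i.val, by omega⟩ := sub_left_inj.1 hbad
        have h := congrArg Fin.val (hX'inj hkey)
        simp at h
      refine Set.mem_iUnion₂.2 ⟨s, ?_, ?_⟩
      · simp only [S, Finset.mem_filter, Fintype.mem_piFinset]
        exact ⟨hmemD, hnb⟩
      · show StrictMono fun j : Fin (r+2) => t (pathOf r x s j) ω
        rw [hpath]
        exact hXmono.comp (Fin.strictMono_castLE hle)
    have hEbound : ∀ s, P (E s) ≤ (((r+2).factorial : ℝ≥0∞))⁻¹ := by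
      intro s
      by_cases hinj : Function.Injective (pathOf r x s)
      · exact prob_strictMono_le P t hmeas hindep μ hid _ hinj
      · have hempty : E s = ∅ := by
          rw [Set.eq_empty_iff_forall_notMem]
          intro ω hω
          have hω' : StrictMono fun j : Fin (r+2) => t (pathOf r x s j) ω := hω
          exact hinj fun a b hab => hω'.injective (congrArg (fun p => t p ω) hab)
        simp [hempty]
    calc P (A r) ≤ P (⋃ s ∈ S r, E s) := measure_mono hsub
      _ ≤ ∑ s ∈ S r, P (E s) := measure_biUnion_finset_le _ _
      _ ≤ ∑ _s ∈ S r, (((r+2).factorial : ℝ≥0∞))⁻¹ := Finset.sum_le_sum fun s _ => hEbound s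
      _ = ((S r).card : ℝ≥0∞) * (((r+2).factorial : ℝ≥0∞))⁻¹ := by
          rw [Finset.sum_const, nsmul_eq_mul]
      _ ≤ (4 * 3 ^ r : ℝ≥0∞) * (((r/2).factorial : ℝ≥0∞))⁻¹ := by
          apply mul_le_mul'
          · exact_mod_cast card_S_le r
          · apply ENNReal.inv_le_inv.2
            exact_mod_cast Nat.factorial_le (by omega : r / 2 ≤ r + 2)
      _ = (4 * 3 ^ r : ℝ≥0∞) / (Nat.factorial (r / 2)) := (div_eq_mul_inv _ _).symm
  refine ⟨key, ?_⟩
  have h0 : Tendsto (fun r : ℕ => (4 * 3 ^ r : ℝ≥0∞) / (Nat.factorial (r / 2))) atTop (nhds 0) := by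
    have heq : ∀ r : ℕ, (4 * 3 ^ r : ℝ≥0∞) / (Nat.factorial (r / 2)) =
        ENNReal.ofReal ((4 * 3 ^ r : ℝ) / (Nat.factorial (r/2) : ℝ)) := by
      intro r
      rw [ENNReal.ofReal_div_of_pos (by positivity)]
      congr 1
      · rw [ENNReal.ofReal_mul (by norm_num), ENNReal.ofReal_pow (by norm_num)]
        norm_num
      · rw [ENNReal.ofReal_natCast]
    simp only [heq]
    rw [show (0:ℝ≥0∞) = ENNReal.ofReal 0 by simp]
    apply ENNReal.tendsto_ofReal
    have hb : Tendsto (fun k : ℕ => (9:ℝ)^k / k.factorial) atTop (nhds 0) :=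
      FloorSemiring.tendsto_pow_div_factorial_atTop 9
    have hdiv : Tendsto (fun r : ℕ => r / 2) atTop atTop :=
      Filter.tendsto_atTop_atTop.2 fun b => ⟨2*b, fun a ha => by omega⟩
    have h12 : Tendsto (fun r : ℕ => 12 * ((9:ℝ)^(r/2) / (Nat.factorial (r/2) : ℝ)))
        atTop (nhds 0) := by
      simpa using (hb.comp hdiv).const_mul 12
    apply squeeze_zero (fun r => by positivity) _ h12
    intro r
    have h3 : (3:ℝ)^r ≤ 3 * 9^(r/2) := by
      calc (3:ℝ)^r ≤ 3^(2*(r/2)+1) := by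
            apply pow_le_pow_right₀ (by norm_num) (by omega)
        _ = 3 * 9^(r/2) := by
            rw [pow_succ, pow_mul]
            norm_num
            ring
    calc (4 * 3 ^ r : ℝ) / (Nat.factorial (r/2) : ℝ)
        ≤ (4 * (3 * 9^(r/2)) : ℝ) / (Nat.factorial (r/2) : ℝ) := by
          gcongr
      _ = 12 * ((9:ℝ)^(r/2) / (Nat.factorial (r/2) : ℝ)) := by ring
  exact tendsto_of_tendsto_of_tendsto_of_le_of_le tendsto_const_nhds h0
    (fun r => zero_le) key
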